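/- Let G be a simple graph on [r] with no isolated vertex and let α be a vertex of SP(G) = {x ∈ ℝ^r : x_i + x_j ≥ 1 for edges {i,j}, x ≥ 0}. Let S_{1/2} = {i : α_i = 1/2}. Then the induced subgraph of G on S_{1/2} has no bipartite connected component. -/

import Mathlib

/-- The polyhedron `SP(G) = {x ∈ ℝ^V : x i + x j ≥ 1 for all edges ij, x ≥ 0}`. -/
def SPgraph {V : Type*} (G : SimpleGraph V) : Set (V → ℝ) :=
  {x | (∀ i j, G.Adj i j → 1 ≤ x i + x j) ∧ ∀ i, 0 ≤ x i}

/-- The connected component (in a graph `H`) of a vertex `v` is bipartite: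
there is a proper 2-colouring of the vertices reachable from `v`. A one-vertex
component is bipartite in this sense. -/
def componentBipartite {W : Type*} (H : SimpleGraph W) (v : W) : Prop :=
  ∃ c : W → Bool, ∀ u w, H.Reachable v u → H.Reachable v w → H.Adj u w → c u ≠ c w

/-- if `α` is a vertex of `SP(G)` (for `G` with no isolated vertex)
and `S½ = {i : α i = 1/2}`, then the induced subgraph of `G` on `S½` has no
bipartite connected component. -/
theorem vertex_SP_half_set_no_bipartite_component
    {r : ℕ} (G : SimpleGraph (Fin r))
    (hiso : ∀ i, ∃ j, G.Adj i j)
    (α : Fin r → ℝ) (hα : α ∈ Set.extremePoints ℝ (SPgraph G)) :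
    ∀ v : {i : Fin r // α i = 1/2},
      ¬ componentBipartite (G.induce {i : Fin r | α i = 1/2})
        ⟨v.1, v.2⟩ := by
  classical
  rintro ⟨v, hv⟩ ⟨c, hc⟩
  obtain ⟨hαmem, hext⟩ := hα
  set H := G.induce {i : Fin r | α i = 1/2} with hH
  set R : Fin r → Prop := fun i => ∃ h : α i = 1/2, H.Reachable ⟨v, hv⟩ ⟨i, h⟩ with hRdef
  have hRhalf : ∀ i, R i → α i = 1/2 := fun i h => h.choose
  have hRv : R v := ⟨hv, SimpleGraph.Reachable.refl _⟩
  have hRadj : ∀ i j, R i → G.Adj i j → α j = 1/2 → R j := by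
    rintro i j ⟨hi, hreach⟩ hadj hj
    refine ⟨hj, hreach.trans (SimpleGraph.Adj.reachable ?_)⟩
    show H.Adj ⟨i, hi⟩ ⟨j, hj⟩
    simpa [hH] using hadj
  set d : Fin r → ℝ := fun i => if h : R i then (if c ⟨i, h.choose⟩ then 1 else -1) else 0
    with hd
  have hd1 : ∀ i, R i → d i = 1 ∨ d i = -1 := by
    intro i hi
    simp only [hd, dif_pos hi]
    cases h : c ⟨i, hi.choose⟩ <;> simp [h]
  have hd0 : ∀ i, ¬ R i → d i = 0 := by
    intro i hi; simp [hd, dif_neg hi]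
  have hopp : ∀ i j, R i → R j → G.Adj i j → d i + d j = 0 := by
    intro i j hi hj hadj
    have hne : c ⟨i, hi.choose⟩ ≠ c ⟨j, hj.choose⟩ := by
      refine hc _ _ hi.choose_spec hj.choose_spec ?_
      show H.Adj ⟨i, hi.choose⟩ ⟨j, hj.choose⟩
      simpa [hH] using hadj
    simp only [hd, dif_pos hi, dif_pos hj]
    cases hci : c ⟨i, hi.choose⟩ <;> cases hcj : c ⟨j, hj.choose⟩
    · exact absurd (hci.trans hcj.symm) hne
    · norm_num
    · norm_num
    · exact absurd (hci.trans hcj.symm) hne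
  set F : Finset (Fin r × Fin r) :=
    Finset.univ.filter (fun p => G.Adj p.1 p.2 ∧ 1 < α p.1 + α p.2) with hF
  set ε : ℝ :=
    if h : F.Nonempty then min (1/2) (F.inf' h (fun p => (α p.1 + α p.2 - 1)/2))
    else 1/2 with hε
  have hεpos : 0 < ε := by
    rw [hε]
    split_ifs with h
    · refine lt_min (by norm_num) ?_
      rw [Finset.lt_inf'_iff]
      intro p hp
      rw [hF, Finset.mem_filter] at hp
      linarith [hp.2.2]
    · norm_num
  have hεhalf : ε ≤ 1/2 := by
    rw [hε]; split_ifs with h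
    · exact min_le_left _ _
    · norm_num
  have hεslack : ∀ i j, G.Adj i j → 1 < α i + α j → 2*ε ≤ α i + α j - 1 := by
    intro i j hadj hlt
    have hmemF : (i, j) ∈ F := by
      rw [hF, Finset.mem_filter]; exact ⟨Finset.mem_univ _, hadj, hlt⟩
    have hne : F.Nonempty := ⟨_, hmemF⟩
    have h1 : ε ≤ (α i + α j - 1)/2 := by
      rw [hε, dif_pos hne]
      exact le_trans (min_le_right _ _) (Finset.inf'_le _ hmemF)
    linarith
  have hmem : ∀ t : ℝ, |t| ≤ ε → (fun i => α i + t * d i) ∈ SPgraph G := by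
    intro t ht
    obtain ⟨ht1, ht2⟩ := abs_le.mp ht
    constructor
    · intro i j hadj
      show 1 ≤ (α i + t * d i) + (α j + t * d j)
      have hbase := hαmem.1 i j hadj
      by_cases hi : R i <;> by_cases hj : R j
      · have h0 := hopp i j hi hj hadj
        nlinarith
      · have hdj := hd0 j hj
        have hij : α j ≠ 1/2 := fun h => hj (hRadj i j hi hadj h)
        have hhalf := hRhalf i hi
        have hlt : 1 < α i + α j := by
          rcases lt_or_gt_of_ne hij with h | h
          · linarith
          · linarith
        have hs := hεslack i j hadj hlt
        rcases hd1 i hi with h | h <;> rw [h, hdj] <;> nlinarith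
      · have hdi := hd0 i hi
        have hij : α i ≠ 1/2 := fun h => hi (hRadj j i hj hadj.symm h)
        have hhalf := hRhalf j hj
        have hlt : 1 < α i + α j := by
          rcases lt_or_gt_of_ne hij with h | h
          · linarith
          · linarith
        have hs := hεslack i j hadj hlt
        rcases hd1 j hj with h | h <;> rw [h, hdi] <;> nlinarith
      · rw [hd0 i hi, hd0 j hj]; simpa using hbase
    · intro i
      show 0 ≤ α i + t * d i
      by_cases hi : R i
      · have hhalf := hRhalf i hi
        rcases hd1 i hi with h | h <;> rw [h] <;> nlinarith
      · rw [hd0 i hi]; simpa using hαmem.2 i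
  have h1 := hmem (-ε) (by rw [abs_neg, abs_of_pos hεpos])
  have h2 := hmem ε (by rw [abs_of_pos hεpos])
  have hseg : α ∈ openSegment ℝ (fun i => α i + (-ε) * d i) (fun i => α i + ε * d i) := by
    refine ⟨1/2, 1/2, by norm_num, by norm_num, by norm_num, ?_⟩
    funext i
    simp only [Pi.add_apply, Pi.smul_apply, smul_eq_mul]
    ring
  obtain ⟨he1, he2⟩ := And.intro (hext h1 h2 hseg) (hext h2 h1 (by rw [openSegment_symm]; exact hseg))
  have hv2 := congrFun he2 v
  have : ε * d v = 0 := by linarith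
  rcases hd1 v hRv with h | h <;> rw [h] at this <;> nlinarith
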